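/- For all positive integers p, q, m, n, the fold map ι is a well-defined injective group homomorphism from K(p,q) to K(mp,nq): for every ψ ∈ K(p,q) the function ι(ψ) vanishes outside Γ(mp,nq) and satisfies 4·ι(ψ)(v) = Σ_{|w−v|=1} ι(ψ)(w) for all v ∈ Γ(mp,nq); moreover ι is additive and injective. (This realizes the sandpile group G(p,q) of the rectangle as a subgroup of G(mp,nq).) -/

import Mathlib

open scoped BigOperators

/-- `v` lies in the open rectangle `Γ(p,q) = (0,p) × (0,q) ∩ ℤ²`. -/
def InRect (p q : ℤ) (v : ℤ × ℤ) : Prop :=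
  0 < v.1 ∧ v.1 < p ∧ 0 < v.2 ∧ v.2 < q

/-- `ψ : ℤ² → ℝ/ℤ` belongs to `K(p,q)`, the realization of the sandpile group
`G(p,q)`: it vanishes outside `Γ(p,q)` and satisfies
`4·ψ(v) = Σ_{|w−v|=1} ψ(w)` for all `v ∈ Γ(p,q)`. -/
def IsK (p q : ℤ) (ψ : ℤ × ℤ → AddCircle (1 : ℝ)) : Prop :=
  (∀ v, ¬ InRect p q v → ψ v = 0) ∧
  ∀ v, InRect p q v → (4 : ℤ) • ψ v =
    ψ (v.1 + 1, v.2) + ψ (v.1 - 1, v.2) + ψ (v.1, v.2 + 1) + ψ (v.1, v.2 - 1)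

/-- `σ_p(x) = x − kp` if `k = ⌊x/p⌋` is even and `(k+1)p − x` if `k` is odd. -/
def sigmaFold (p x : ℤ) : ℤ :=
  if Even (x / p) then x - x / p * p else (x / p + 1) * p - x

open Classical in
/-- The fold map `ι : K(p,q) → K(P,Q)` (with `P = mp`, `Q = nq`):
`ι(ψ)(x,y) = (−1)^{⌊x/p⌋+⌊y/q⌋} ψ(σ_p(x), σ_q(y))` on `Γ(P,Q)` and `0` outside. -/
noncomputable def foldMap (p q P Q : ℤ) (ψ : ℤ × ℤ → AddCircle (1 : ℝ)) :
    ℤ × ℤ → AddCircle (1 : ℝ) :=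
  fun v => if InRect P Q v then
      ((if Even (v.1 / p + v.2 / q) then (1 : ℤ) else -1)) •
        ψ (sigmaFold p v.1, sigmaFold q v.2)
    else 0

/-- `μ_{p,k}(x) = kp + x` if `k` is even and `(k+1)p − x` if `k` is odd. -/
def muFold (p k x : ℤ) : ℤ := if Even k then k * p + x else (k + 1) * p - x

open Classical in
/-- The dual map `π : K(mp,nq) → K(p,q)`:
`π(ψ)(x,y) = Σ_{k<m} Σ_{l<n} (−1)^{k+l} ψ(μ_{p,k}(x), μ_{q,l}(y))` on `Γ(p,q)`
and `0` outside. -/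
noncomputable def dualMap (p q : ℤ) (m n : ℕ) (ψ : ℤ × ℤ → AddCircle (1 : ℝ)) :
    ℤ × ℤ → AddCircle (1 : ℝ) :=
  fun v => if InRect p q v then
      ∑ k ∈ Finset.range m, ∑ l ∈ Finset.range n,
        ((-1 : ℤ) ^ (k + l)) • ψ (muFold p k v.1, muFold q l v.2)
    else 0

abbrev Circ := AddCircle (1 : ℝ)

lemma edivAux (p a r : ℤ) (hp : 0 < p) (h0 : 0 ≤ r) (h1 : r < p) :
    (a * p + r) / p = a := by
  rw [add_comm, Int.add_mul_ediv_right _ _ hp.ne', Int.ediv_eq_zero_of_lt h0 h1, zero_add]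

lemma sigmaAux (p a r : ℤ) (hp : 0 < p) (h0 : 0 ≤ r) (h1 : r < p) :
    sigmaFold p (a * p + r) = if Even a then r else p - r := by
  unfold sigmaFold
  rw [edivAux p a r hp h0 h1]
  split <;> ring

lemma decompAux (p x : ℤ) (hp : 0 < p) :
    ∃ k r : ℤ, x = k * p + r ∧ 0 ≤ r ∧ r < p :=
  ⟨x / p, x % p, by linarith [Int.mul_ediv_add_emod x p],
    Int.emod_nonneg x hp.ne', Int.emod_lt_of_pos x hp⟩

lemma sigma_of_dvd (p x : ℤ) (hp : 0 < p) (hd : p ∣ x) :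
    sigmaFold p x = 0 ∨ sigmaFold p x = p := by
  obtain ⟨k, rfl⟩ := hd
  have e : p * k = k * p + 0 := by ring
  rw [e, sigmaAux p k 0 hp le_rfl hp]
  by_cases h : Even k <;> simp [h]

lemma sigma_of_not_dvd (p x : ℤ) (hp : 0 < p) (hd : ¬ p ∣ x) :
    0 < sigmaFold p x ∧ sigmaFold p x < p := by
  obtain ⟨k, r, rfl, h0, h1⟩ := decompAux p x hp
  have hr : r ≠ 0 := by rintro rfl; exact hd ⟨k, by ring⟩
  rw [sigmaAux p k r hp h0 h1]
  split <;> omega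

lemma stepUp (p x : ℤ) (hp : 0 < p) (f : ℤ → Circ) (h0 : f 0 = 0) (hpp : f p = 0) :
    (if Even ((x + 1) / p) then (1 : ℤ) else -1) • f (sigmaFold p (x + 1)) =
    (if Even (x / p) then (1 : ℤ) else -1) •
      f (sigmaFold p x + (if Even (x / p) then 1 else -1)) := by
  obtain ⟨k, r, rfl, hr0, hr1⟩ := decompAux p x hp
  rw [sigmaAux p k r hp hr0 hr1, edivAux p k r hp hr0 hr1]
  rcases lt_or_eq_of_le (by omega : r + 1 ≤ p) with hlt | heq
  · have e1 : k * p + r + 1 = k * p + (r + 1) := by ring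
    rw [e1, sigmaAux p k (r + 1) hp (by omega) hlt, edivAux p k (r + 1) hp (by omega) hlt]
    by_cases hek : Even k
    · simp only [if_pos hek]
    · simp only [if_neg hek]
      have e2 : p - (r + 1) = p - r + -1 := by ring
      rw [e2]
  · have e1 : k * p + r + 1 = (k + 1) * p + 0 := by rw [← heq]; ring
    rw [e1, sigmaAux p (k + 1) 0 hp le_rfl hp, edivAux p (k + 1) 0 hp le_rfl hp]
    by_cases hek : Even k
    · have hk1 : ¬ Even (k + 1) := by simp [Int.even_add_one, hek]
      simp only [if_neg hk1, if_pos hek, heq, sub_zero, hpp, smul_zero]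
    · have hk1 : Even (k + 1) := by rw [Int.even_add_one]; exact hek
      have e2 : p - r + -1 = 0 := by omega
      simp only [if_pos hk1, if_neg hek, e2, add_zero, h0, smul_zero]

lemma stepDown (p x : ℤ) (hp : 0 < p) (f : ℤ → Circ) (hnd : ¬ p ∣ x) :
    (if Even ((x - 1) / p) then (1 : ℤ) else -1) • f (sigmaFold p (x - 1)) =
    (if Even (x / p) then (1 : ℤ) else -1) •
      f (sigmaFold p x - (if Even (x / p) then 1 else -1)) := by
  obtain ⟨k, r, rfl, hr0, hr1⟩ := decompAux p x hp
  have hr : r ≠ 0 := by rintro rfl; exact hnd ⟨k, by ring⟩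
  rw [sigmaAux p k r hp hr0 hr1, edivAux p k r hp hr0 hr1]
  have e1 : k * p + r - 1 = k * p + (r - 1) := by ring
  rw [e1, sigmaAux p k (r - 1) hp (by omega) (by omega),
    edivAux p k (r - 1) hp (by omega) (by omega)]
  by_cases hek : Even k
  · simp only [if_pos hek]
  · simp only [if_neg hek]
    have e2 : p - (r - 1) = p - r - -1 := by ring
    rw [e2]

lemma divPair (p x : ℤ) (hp : 0 < p) (f : ℤ → Circ) (h0 : f 0 = 0) (hpp : f p = 0)
    (hd : p ∣ x) :
    (if Even ((x + 1) / p) then (1 : ℤ) else -1) • f (sigmaFold p (x + 1)) +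
    (if Even ((x - 1) / p) then (1 : ℤ) else -1) • f (sigmaFold p (x - 1)) = 0 := by
  rw [stepUp p x hp f h0 hpp]
  obtain ⟨k, rfl⟩ := hd
  have e0 : p * k = k * p + 0 := by ring
  rw [e0, sigmaAux p k 0 hp le_rfl hp, edivAux p k 0 hp le_rfl hp]
  have e1 : k * p + 0 - 1 = (k - 1) * p + (p - 1) := by ring
  rw [e1, sigmaAux p (k - 1) (p - 1) hp (by omega) (by omega),
    edivAux p (k - 1) (p - 1) hp (by omega) (by omega)]
  by_cases hek : Even k
  · have hk1 : ¬ Even (k - 1) := by simp [Int.even_sub_one, hek]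
    simp only [if_pos hek, if_neg hk1]
    have e2 : p - (p - 1) = 0 + 1 := by ring
    rw [e2, one_smul, neg_one_smul, add_neg_cancel]
  · have hk1 : Even (k - 1) := by rw [Int.even_sub_one]; exact hek
    simp only [if_neg hek, if_pos hk1]
    have e2 : p - 0 + -1 = p - 1 := by ring
    rw [e2, one_smul, neg_one_smul, neg_add_cancel]

lemma ndPair (p x : ℤ) (hp : 0 < p) (f : ℤ → Circ) (h0 : f 0 = 0) (hpp : f p = 0)
    (hnd : ¬ p ∣ x) :
    (if Even ((x + 1) / p) then (1 : ℤ) else -1) • f (sigmaFold p (x + 1)) +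
    (if Even ((x - 1) / p) then (1 : ℤ) else -1) • f (sigmaFold p (x - 1)) =
    (if Even (x / p) then (1 : ℤ) else -1) •
      (f (sigmaFold p x + 1) + f (sigmaFold p x - 1)) := by
  rw [stepUp p x hp f h0 hpp, stepDown p x hp f hnd]
  by_cases hek : Even (x / p)
  · simp only [if_pos hek, smul_add]
  · simp only [if_neg hek, smul_add]
    have e1 : sigmaFold p x + -1 = sigmaFold p x - 1 := by ring
    have e2 : sigmaFold p x - -1 = sigmaFold p x + 1 := by ring
    rw [e1, e2]
    abel

lemma signMulAux (a b : ℤ) :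
    (if Even (a + b) then (1 : ℤ) else -1) =
    (if Even a then (1 : ℤ) else -1) * (if Even b then (1 : ℤ) else -1) := by
  by_cases ha : Even a <;> by_cases hb : Even b <;>
    simp [Int.even_add, ha, hb]

open Classical in
noncomputable def gFold (p q : ℤ) (ψ : ℤ × ℤ → Circ) (v : ℤ × ℤ) : Circ :=
  (if Even (v.1 / p + v.2 / q) then (1 : ℤ) else -1) •
    ψ (sigmaFold p v.1, sigmaFold q v.2)

lemma gFold_left (p q : ℤ) (ψ : ℤ × ℤ → Circ) (a b : ℤ) :
    gFold p q ψ (a, b) = (if Even (a / p) then (1 : ℤ) else -1) •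
      ((if Even (b / q) then (1 : ℤ) else -1) • ψ (sigmaFold p a, sigmaFold q b)) := by
  show (if Even (a / p + b / q) then (1 : ℤ) else -1) • ψ (sigmaFold p a, sigmaFold q b) = _
  rw [signMulAux, mul_smul]

lemma gFold_right (p q : ℤ) (ψ : ℤ × ℤ → Circ) (a b : ℤ) :
    gFold p q ψ (a, b) = (if Even (b / q) then (1 : ℤ) else -1) •
      ((if Even (a / p) then (1 : ℤ) else -1) • ψ (sigmaFold p a, sigmaFold q b)) := by
  show (if Even (a / p + b / q) then (1 : ℤ) else -1) • ψ (sigmaFold p a, sigmaFold q b) = _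
  rw [signMulAux, mul_comm, mul_smul]

lemma notInRect_left (p q a b : ℤ) (h : a ≤ 0 ∨ p ≤ a) : ¬ InRect p q (a, b) := by
  rintro ⟨h1, h2, -, -⟩
  have h1' : 0 < a := h1
  have h2' : a < p := h2
  omega

lemma notInRect_right (p q a b : ℤ) (h : b ≤ 0 ∨ q ≤ b) : ¬ InRect p q (a, b) := by
  rintro ⟨-, -, h3, h4⟩
  have h3' : 0 < b := h3
  have h4' : b < q := h4
  omega

lemma gFold_zero_left (p q : ℤ) (hp : 0 < p) (ψ : ℤ × ℤ → Circ) (hψ : IsK p q ψ)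
    (x y : ℤ) (hd : p ∣ x) : gFold p q ψ (x, y) = 0 := by
  have hs := sigma_of_dvd p x hp hd
  show (if Even (x / p + y / q) then (1 : ℤ) else -1) •
    ψ (sigmaFold p x, sigmaFold q y) = 0
  rcases hs with h | h <;> rw [h]
  · rw [hψ.1 _ (notInRect_left p q 0 (sigmaFold q y) (Or.inl le_rfl))]; simp
  · rw [hψ.1 _ (notInRect_left p q p (sigmaFold q y) (Or.inr le_rfl))]; simp

lemma gFold_zero_right (p q : ℤ) (hq : 0 < q) (ψ : ℤ × ℤ → Circ) (hψ : IsK p q ψ)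
    (x y : ℤ) (hd : q ∣ y) : gFold p q ψ (x, y) = 0 := by
  have hs := sigma_of_dvd q y hq hd
  show (if Even (x / p + y / q) then (1 : ℤ) else -1) •
    ψ (sigmaFold p x, sigmaFold q y) = 0
  rcases hs with h | h <;> rw [h]
  · rw [hψ.1 _ (notInRect_right p q (sigmaFold p x) 0 (Or.inl le_rfl))]; simp
  · rw [hψ.1 _ (notInRect_right p q (sigmaFold p x) q (Or.inr le_rfl))]; simp

lemma fx0Aux (p q y : ℤ) (ψ : ℤ × ℤ → Circ) (hψ : IsK p q ψ) :
    (if Even (y / q) then (1 : ℤ) else -1) • ψ (0, sigmaFold q y) = 0 := by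
  rw [hψ.1 _ (notInRect_left p q 0 (sigmaFold q y) (Or.inl le_rfl))]; simp

lemma fxpAux (p q y : ℤ) (ψ : ℤ × ℤ → Circ) (hψ : IsK p q ψ) :
    (if Even (y / q) then (1 : ℤ) else -1) • ψ (p, sigmaFold q y) = 0 := by
  rw [hψ.1 _ (notInRect_left p q p (sigmaFold q y) (Or.inr le_rfl))]; simp

lemma fy0Aux (p q x : ℤ) (ψ : ℤ × ℤ → Circ) (hψ : IsK p q ψ) :
    (if Even (x / p) then (1 : ℤ) else -1) • ψ (sigmaFold p x, 0) = 0 := by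
  rw [hψ.1 _ (notInRect_right p q (sigmaFold p x) 0 (Or.inl le_rfl))]; simp

lemma fyqAux (p q x : ℤ) (ψ : ℤ × ℤ → Circ) (hψ : IsK p q ψ) :
    (if Even (x / p) then (1 : ℤ) else -1) • ψ (sigmaFold p x, q) = 0 := by
  rw [hψ.1 _ (notInRect_right p q (sigmaFold p x) q (Or.inr le_rfl))]; simp

lemma divPairX (p q x y : ℤ) (hp : 0 < p) (ψ : ℤ × ℤ → Circ) (hψ : IsK p q ψ)
    (hd : p ∣ x) :
    gFold p q ψ (x + 1, y) + gFold p q ψ (x - 1, y) = 0 := by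
  have h := divPair p x hp
    (fun t => (if Even (y / q) then (1 : ℤ) else -1) • ψ (t, sigmaFold q y))
    (fx0Aux p q y ψ hψ) (fxpAux p q y ψ hψ) hd
  rw [gFold_left p q ψ (x + 1) y, gFold_left p q ψ (x - 1) y]
  exact h

lemma divPairY (p q x y : ℤ) (hq : 0 < q) (ψ : ℤ × ℤ → Circ) (hψ : IsK p q ψ)
    (hd : q ∣ y) :
    gFold p q ψ (x, y + 1) + gFold p q ψ (x, y - 1) = 0 := by
  have h := divPair q y hq
    (fun t => (if Even (x / p) then (1 : ℤ) else -1) • ψ (sigmaFold p x, t))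
    (fy0Aux p q x ψ hψ) (fyqAux p q x ψ hψ) hd
  rw [gFold_right p q ψ x (y + 1), gFold_right p q ψ x (y - 1)]
  exact h

lemma ndPairX (p q x y : ℤ) (hp : 0 < p) (ψ : ℤ × ℤ → Circ) (hψ : IsK p q ψ)
    (hnd : ¬ p ∣ x) :
    gFold p q ψ (x + 1, y) + gFold p q ψ (x - 1, y) =
    (if Even (x / p + y / q) then (1 : ℤ) else -1) •
      (ψ (sigmaFold p x + 1, sigmaFold q y) + ψ (sigmaFold p x - 1, sigmaFold q y)) := by
  have h := ndPair p x hp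
    (fun t => (if Even (y / q) then (1 : ℤ) else -1) • ψ (t, sigmaFold q y))
    (fx0Aux p q y ψ hψ) (fxpAux p q y ψ hψ) hnd
  rw [gFold_left p q ψ (x + 1) y, gFold_left p q ψ (x - 1) y, h,
    signMulAux (x / p) (y / q), mul_smul]
  simp only [smul_add]

lemma ndPairY (p q x y : ℤ) (hq : 0 < q) (ψ : ℤ × ℤ → Circ) (hψ : IsK p q ψ)
    (hnd : ¬ q ∣ y) :
    gFold p q ψ (x, y + 1) + gFold p q ψ (x, y - 1) =
    (if Even (x / p + y / q) then (1 : ℤ) else -1) •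
      (ψ (sigmaFold p x, sigmaFold q y + 1) + ψ (sigmaFold p x, sigmaFold q y - 1)) := by
  have h := ndPair q y hq
    (fun t => (if Even (x / p) then (1 : ℤ) else -1) • ψ (sigmaFold p x, t))
    (fy0Aux p q x ψ hψ) (fyqAux p q x ψ hψ) hnd
  rw [gFold_right p q ψ x (y + 1), gFold_right p q ψ x (y - 1), h,
    signMulAux (x / p) (y / q), mul_comm, mul_smul]
  simp only [smul_add]

lemma gFold_harmonic (p q : ℤ) (hp : 0 < p) (hq : 0 < q) (ψ : ℤ × ℤ → Circ)
    (hψ : IsK p q ψ) (x y : ℤ) :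
    (4 : ℤ) • gFold p q ψ (x, y) =
      gFold p q ψ (x + 1, y) + gFold p q ψ (x - 1, y) + gFold p q ψ (x, y + 1) +
        gFold p q ψ (x, y - 1) := by
  by_cases hdx : p ∣ x
  · rw [gFold_zero_left p q hp ψ hψ x y hdx,
      gFold_zero_left p q hp ψ hψ x (y + 1) hdx,
      gFold_zero_left p q hp ψ hψ x (y - 1) hdx,
      divPairX p q x y hp ψ hψ hdx]
    simp
  · by_cases hdy : q ∣ y
    · rw [gFold_zero_right p q hq ψ hψ x y hdy,
        gFold_zero_right p q hq ψ hψ (x + 1) y hdy,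
        gFold_zero_right p q hq ψ hψ (x - 1) y hdy, add_assoc,
        divPairY p q x y hq ψ hψ hdy]
      simp
    · have hx := sigma_of_not_dvd p x hp hdx
      have hy := sigma_of_not_dvd q y hq hdy
      have h4 : (4 : ℤ) • ψ (sigmaFold p x, sigmaFold q y) =
          ψ (sigmaFold p x + 1, sigmaFold q y) + ψ (sigmaFold p x - 1, sigmaFold q y) +
          ψ (sigmaFold p x, sigmaFold q y + 1) + ψ (sigmaFold p x, sigmaFold q y - 1) :=
        hψ.2 (sigmaFold p x, sigmaFold q y) ⟨hx.1, hx.2, hy.1, hy.2⟩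
      rw [add_assoc, ndPairX p q x y hp ψ hψ hdx, ndPairY p q x y hq ψ hψ hdy]
      have hc : gFold p q ψ (x, y) = (if Even (x / p + y / q) then (1 : ℤ) else -1) •
          ψ (sigmaFold p x, sigmaFold q y) := rfl
      rw [hc, smul_comm, h4, add_assoc _ (ψ (sigmaFold p x, sigmaFold q y + 1)), smul_add]

lemma inRect_iff (p q a b : ℤ) :
    InRect p q (a, b) ↔ (0 < a ∧ a < p ∧ 0 < b ∧ b < q) := Iff.rfl

lemma foldMap_eq_gFold (p q P Q : ℤ) (hp : 0 < p) (hq : 0 < q) (hP : p ∣ P) (hQ : q ∣ Q)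
    (ψ : ℤ × ℤ → Circ) (hψ : IsK p q ψ) (x y : ℤ)
    (h1 : 0 ≤ x) (h2 : x ≤ P) (h3 : 0 ≤ y) (h4 : y ≤ Q) :
    foldMap p q P Q ψ (x, y) = gFold p q ψ (x, y) := by
  unfold foldMap
  split
  · rfl
  · rename_i hv
    have hd : x = 0 ∨ x = P ∨ y = 0 ∨ y = Q := by
      rw [inRect_iff] at hv; omega
    rcases hd with h | h | h | h
    · exact (gFold_zero_left p q hp ψ hψ x y (by rw [h]; exact dvd_zero p)).symm
    · exact (gFold_zero_left p q hp ψ hψ x y (by rw [h]; exact hP)).symm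
    · exact (gFold_zero_right p q hq ψ hψ x y (by rw [h]; exact dvd_zero q)).symm
    · exact (gFold_zero_right p q hq ψ hψ x y (by rw [h]; exact hQ)).symm

lemma isK_foldMap (p q P Q : ℤ) (hp : 0 < p) (hq : 0 < q) (hP : p ∣ P) (hQ : q ∣ Q)
    (ψ : ℤ × ℤ → Circ) (hψ : IsK p q ψ) : IsK P Q (foldMap p q P Q ψ) := by
  constructor
  · intro v hv
    unfold foldMap
    rw [if_neg hv]
  · rintro ⟨x, y⟩ hv
    have h1 : 0 < x := hv.1
    have h2 : x < P := hv.2.1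
    have h3 : 0 < y := hv.2.2.1
    have h4 : y < Q := hv.2.2.2
    show (4 : ℤ) • foldMap p q P Q ψ (x, y) =
      foldMap p q P Q ψ (x + 1, y) + foldMap p q P Q ψ (x - 1, y) +
      foldMap p q P Q ψ (x, y + 1) + foldMap p q P Q ψ (x, y - 1)
    rw [foldMap_eq_gFold p q P Q hp hq hP hQ ψ hψ x y (by omega) (by omega) (by omega) (by omega),
      foldMap_eq_gFold p q P Q hp hq hP hQ ψ hψ (x + 1) y (by omega) (by omega) (by omega) (by omega),
      foldMap_eq_gFold p q P Q hp hq hP hQ ψ hψ (x - 1) y (by omega) (by omega) (by omega) (by omega),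
      foldMap_eq_gFold p q P Q hp hq hP hQ ψ hψ x (y + 1) (by omega) (by omega) (by omega) (by omega),
      foldMap_eq_gFold p q P Q hp hq hP hQ ψ hψ x (y - 1) (by omega) (by omega) (by omega) (by omega)]
    exact gFold_harmonic p q hp hq ψ hψ x y


/-- The fold map `ι` is a well-defined injective group homomorphism from
`K(p,q)` to `K(mp,nq)`: it maps `K(p,q)` into `K(mp,nq)`, is additive, and is
injective.  This realizes `G(p,q)` as a subgroup of `G(mp,nq)`. -/
theorem foldMap_monomorphism (p q m n : ℕ)
    (hp : 0 < p) (hq : 0 < q) (hm : 0 < m) (hn : 0 < n) :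
    (∀ ψ, IsK p q ψ →
      IsK ((m : ℤ) * p) ((n : ℤ) * q) (foldMap p q ((m : ℤ) * p) ((n : ℤ) * q) ψ)) ∧
    (∀ ψ₁ ψ₂, IsK p q ψ₁ → IsK p q ψ₂ →
      foldMap p q ((m : ℤ) * p) ((n : ℤ) * q) (ψ₁ + ψ₂) =
        foldMap p q ((m : ℤ) * p) ((n : ℤ) * q) ψ₁ +
        foldMap p q ((m : ℤ) * p) ((n : ℤ) * q) ψ₂) ∧
    (∀ ψ₁ ψ₂, IsK p q ψ₁ → IsK p q ψ₂ →
      foldMap p q ((m : ℤ) * p) ((n : ℤ) * q) ψ₁ =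
        foldMap p q ((m : ℤ) * p) ((n : ℤ) * q) ψ₂ → ψ₁ = ψ₂) := by
  have hp' : (0 : ℤ) < (p : ℤ) := by exact_mod_cast hp
  have hq' : (0 : ℤ) < (q : ℤ) := by exact_mod_cast hq
  have hm' : (1 : ℤ) ≤ (m : ℤ) := by exact_mod_cast hm
  have hn' : (1 : ℤ) ≤ (n : ℤ) := by exact_mod_cast hn
  have hP : (p : ℤ) ∣ (m : ℤ) * p := dvd_mul_left _ _
  have hQ : (q : ℤ) ∣ (n : ℤ) * q := dvd_mul_left _ _
  have hpP : (p : ℤ) ≤ (m : ℤ) * p := le_mul_of_one_le_left hp'.le hm'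
  have hqQ : (q : ℤ) ≤ (n : ℤ) * q := le_mul_of_one_le_left hq'.le hn'
  have key : ∀ (ψ : ℤ × ℤ → Circ) (x y : ℤ), InRect p q (x, y) →
      foldMap p q ((m : ℤ) * p) ((n : ℤ) * q) ψ (x, y) = ψ (x, y) := by
    intro ψ x y hv
    have h1 : 0 < x := hv.1
    have h2 : x < (p : ℤ) := hv.2.1
    have h3 : 0 < y := hv.2.2.1
    have h4 : y < (q : ℤ) := hv.2.2.2
    have hin : InRect ((m : ℤ) * p) ((n : ℤ) * q) (x, y) :=
      ⟨h1, lt_of_lt_of_le h2 hpP, h3, lt_of_lt_of_le h4 hqQ⟩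
    have hx0 : x / (p : ℤ) = 0 := Int.ediv_eq_zero_of_lt h1.le h2
    have hy0 : y / (q : ℤ) = 0 := Int.ediv_eq_zero_of_lt h3.le h4
    have hsx : sigmaFold p x = x := by
      unfold sigmaFold; rw [hx0]; norm_num
    have hsy : sigmaFold q y = y := by
      unfold sigmaFold; rw [hy0]; norm_num
    unfold foldMap
    rw [if_pos hin]
    show (if Even (x / (p : ℤ) + y / (q : ℤ)) then (1 : ℤ) else -1) •
      ψ (sigmaFold p x, sigmaFold q y) = ψ (x, y)
    rw [hx0, hy0, hsx, hsy]
    norm_num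
  refine ⟨?_, ?_, ?_⟩
  · intro ψ hψ
    exact isK_foldMap p q _ _ hp' hq' hP hQ ψ hψ
  · intro ψ₁ ψ₂ _ _
    funext v
    by_cases hv : InRect ((m : ℤ) * p) ((n : ℤ) * q) v <;>
      simp [foldMap, hv, Pi.add_apply, smul_add]
  · intro ψ₁ ψ₂ h₁ h₂ heq
    funext v
    obtain ⟨x, y⟩ := v
    by_cases hv : InRect p q (x, y)
    · rw [← key ψ₁ x y hv, ← key ψ₂ x y hv, heq]
    · rw [h₁.1 _ hv, h₂.1 _ hv]
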